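/- Let K be a kernel, let d_0, …, d_m be an m-th order difference sequence with m ≥ 1, and let ℓ ≥ 1 and h ≥ 1 be integers. Then Σ_{k=−(ℓ+mh)}^{ℓ+mh} K_diff(k/ℓ) = 0, i.e. the differencing kernel weights sum to zero. -/
import Mathlib

/-- `δ_s = ∑_{j=|s|}^m d_j d_{j-|s|}` for `|s| ≤ m`, and `δ_s = 0` for `|s| > m`. -/
noncomputable def delta (d : ℕ → ℝ) (m : ℕ) (s : ℤ) : ℝ :=
  if s.natAbs ≤ m then ∑ j ∈ Finset.Icc s.natAbs m, d j * d (j - s.natAbs) else 0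

/-- The differencing kernel
`K_diff(t) = ∑_{s=⌈-(1+t)/λ⌉}^{⌊(1-t)/λ⌋} δ_{|s|} K(t + λ s)` with `λ = h/ℓ`. -/
noncomputable def Kdiff (K : ℝ → ℝ) (d : ℕ → ℝ) (m ℓ h : ℕ) (t : ℝ) : ℝ :=
  ∑ s ∈ Finset.Icc ⌈(-(1 + t)) / ((h : ℝ) / (ℓ : ℝ))⌉ ⌊(1 - t) / ((h : ℝ) / (ℓ : ℝ))⌋,
    delta d m |s| * K (t + ((h : ℝ) / (ℓ : ℝ)) * (s : ℝ))

/-- Extend the `s`-sum in `Kdiff` to the fixed range `[-m, m]`. -/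
lemma Kdiff_eq (K : ℝ → ℝ) (hKsupp : ∀ t : ℝ, 1 ≤ |t| → K t = 0)
    (d : ℕ → ℝ) (m ℓ h : ℕ) (hℓ : 1 ≤ ℓ) (hh : 1 ≤ h) (t : ℝ) :
    Kdiff K d m ℓ h t
      = ∑ s ∈ Finset.Icc (-(m : ℤ)) (m : ℤ),
          delta d m |s| * K (t + ((h : ℝ) / (ℓ : ℝ)) * (s : ℝ)) := by
  have hℓ' : (0 : ℝ) < (ℓ : ℝ) := by exact_mod_cast hℓ
  have hh' : (0 : ℝ) < (h : ℝ) := by exact_mod_cast hh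
  have hlam : (0 : ℝ) < (h : ℝ) / (ℓ : ℝ) := div_pos hh' hℓ'
  set lam : ℝ := (h : ℝ) / (ℓ : ℝ) with hlamdef
  set A : ℤ := ⌈(-(1 + t)) / lam⌉ with hA
  set B : ℤ := ⌊(1 - t) / lam⌋ with hB
  set L : ℤ := min A (-(m : ℤ)) with hL
  set U : ℤ := max B (m : ℤ) with hU
  have hKzero : ∀ s : ℤ, s < A ∨ B < s → K (t + lam * (s : ℝ)) = 0 := by
    intro s hs
    apply hKsupp
    rcases hs with hs | hs
    · have h1 : (s : ℝ) < (-(1 + t)) / lam := by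
        exact_mod_cast Int.lt_ceil.mp hs
      have h2 : lam * (s : ℝ) < -(1 + t) := by
        rw [lt_div_iff₀ hlam] at h1; linarith [h1]
      rw [le_abs]
      right
      linarith
    · have h1 : (1 - t) / lam < (s : ℝ) := by
        exact_mod_cast Int.floor_lt.mp hs
      have h2 : 1 - t < lam * (s : ℝ) := by
        rw [div_lt_iff₀ hlam] at h1; linarith
      rw [le_abs]
      left
      linarith
  have hdzero : ∀ s : ℤ, s < -(m : ℤ) ∨ (m : ℤ) < s → delta d m |s| = 0 := by
    intro s hs
    rw [delta, if_neg]
    rw [Int.natAbs_abs]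
    omega
  rw [Kdiff]
  rw [show Finset.Icc A B = Finset.Icc A B from rfl]
  have e1 : (∑ s ∈ Finset.Icc A B, delta d m |s| * K (t + lam * (s : ℝ)))
      = ∑ s ∈ Finset.Icc L U, delta d m |s| * K (t + lam * (s : ℝ)) := by
    apply Finset.sum_subset
    · apply Finset.Icc_subset_Icc (min_le_left _ _) (le_max_left _ _)
    · intro s _ hs
      simp only [Finset.mem_Icc, not_and_or, not_le] at hs
      rw [hKzero s hs, mul_zero]
  have e2 : (∑ s ∈ Finset.Icc (-(m : ℤ)) (m : ℤ), delta d m |s| * K (t + lam * (s : ℝ)))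
      = ∑ s ∈ Finset.Icc L U, delta d m |s| * K (t + lam * (s : ℝ)) := by
    apply Finset.sum_subset
    · apply Finset.Icc_subset_Icc (min_le_right _ _) (le_max_right _ _)
    · intro s _ hs
      simp only [Finset.mem_Icc, not_and_or, not_le] at hs
      rw [hdzero s hs, zero_mul]
  rw [e1, ← e2]

/-- The sum of the `δ`'s equals the square of the sum of the `d`'s. -/
lemma sum_delta (d : ℕ → ℝ) (m : ℕ) :
    ∑ s ∈ Finset.Icc (-(m : ℤ)) (m : ℤ), delta d m |s|
      = (∑ j ∈ Finset.range (m + 1), d j) ^ 2 := by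
  have hdelta : ∀ s ∈ Finset.Icc (-(m : ℤ)) (m : ℤ),
      delta d m |s| = ∑ j ∈ Finset.Icc s.natAbs m, d j * d (j - s.natAbs) := by
    intro s hs
    simp only [Finset.mem_Icc] at hs
    simp only [delta, Int.natAbs_abs]
    rw [if_pos (by omega)]
  rw [Finset.sum_congr rfl hdelta, sq, Finset.sum_mul_sum, ← Finset.sum_product',
    Finset.sum_sigma']
  apply Finset.sum_nbij' (i := fun p : Σ _ : ℤ, ℕ =>
      if 0 ≤ p.1 then (p.2, p.2 - p.1.natAbs) else (p.2 - p.1.natAbs, p.2))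
    (j := fun q : ℕ × ℕ => ⟨(q.1 : ℤ) - (q.2 : ℤ), max q.1 q.2⟩)
  · rintro ⟨s, j⟩ hp
    simp only [Finset.mem_sigma, Finset.mem_Icc] at hp
    by_cases hs : 0 ≤ s
    · rw [if_pos hs]
      simp only [Finset.mem_product, Finset.mem_range]
      omega
    · rw [if_neg hs]
      simp only [Finset.mem_product, Finset.mem_range]
      omega
  · rintro ⟨a, b⟩ hq
    simp only [Finset.mem_product, Finset.mem_range] at hq
    simp only [Finset.mem_sigma, Finset.mem_Icc]
    refine ⟨⟨?_, ?_⟩, ?_, ?_⟩ <;> omega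
  · rintro ⟨s, j⟩ hp
    simp only [Finset.mem_sigma, Finset.mem_Icc] at hp
    by_cases hs : 0 ≤ s
    · rw [if_pos hs]
      have h1 : ((j : ℤ) - ((j - s.natAbs : ℕ) : ℤ)) = s := by push_cast; omega
      have h2 : j ⊔ (j - s.natAbs) = j := by omega
      rw [h1, h2]
    · rw [if_neg hs]
      have h1 : (((j - s.natAbs : ℕ) : ℤ) - (j : ℤ)) = s := by push_cast; omega
      have h2 : (j - s.natAbs) ⊔ j = j := by omega
      rw [h1, h2]
  · rintro ⟨a, b⟩ hq
    simp only [Finset.mem_product, Finset.mem_range] at hq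
    dsimp only
    by_cases hab : (b : ℤ) ≤ (a : ℤ)
    · rw [if_pos (by omega)]
      simp only [Prod.mk.injEq]
      constructor <;> omega
    · rw [if_neg (by omega)]
      simp only [Prod.mk.injEq]
      constructor <;> omega
  · rintro ⟨s, j⟩ hp
    simp only [Finset.mem_sigma, Finset.mem_Icc] at hp
    by_cases hs : 0 ≤ s
    · rw [if_pos hs]
    · rw [if_neg hs]
      exact mul_comm _ _

theorem stmt2 (K : ℝ → ℝ) (hK0 : K 0 = 1) (hKsymm : ∀ t, K (-t) = K t)
    (hKsupp : ∀ t : ℝ, 1 ≤ |t| → K t = 0)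
    (m : ℕ) (hm : 1 ≤ m) (d : ℕ → ℝ) (hd : ∑ j ∈ Finset.range (m + 1), d j = 0)
    (ℓ h : ℕ) (hℓ : 1 ≤ ℓ) (hh : 1 ≤ h) :
    ∑ k ∈ Finset.Icc (-(ℓ + m * h : ℤ)) ((ℓ + m * h : ℕ) : ℤ),
      Kdiff K d m ℓ h ((k : ℝ) / (ℓ : ℝ)) = 0 := by
  have hℓ' : (0 : ℝ) < (ℓ : ℝ) := by exact_mod_cast hℓ
  -- rewrite using Kdiff_eq and swap sums
  have step1 : ∑ k ∈ Finset.Icc (-(ℓ + m * h : ℤ)) ((ℓ + m * h : ℕ) : ℤ),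
      Kdiff K d m ℓ h ((k : ℝ) / (ℓ : ℝ))
      = ∑ s ∈ Finset.Icc (-(m : ℤ)) (m : ℤ), delta d m |s| *
          ∑ k ∈ Finset.Icc (-(ℓ + m * h : ℤ)) ((ℓ + m * h : ℕ) : ℤ),
            K ((k : ℝ) / (ℓ : ℝ) + ((h : ℝ) / (ℓ : ℝ)) * (s : ℝ)) := by
    rw [Finset.sum_congr rfl (fun k _ => Kdiff_eq K hKsupp d m ℓ h hℓ hh _)]
    rw [Finset.sum_comm]
    exact Finset.sum_congr rfl fun s _ => (Finset.mul_sum _ _ _).symm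
  rw [step1]
  -- inner sum is independent of s
  have step2 : ∀ s ∈ Finset.Icc (-(m : ℤ)) (m : ℤ),
      (∑ k ∈ Finset.Icc (-(ℓ + m * h : ℤ)) ((ℓ + m * h : ℕ) : ℤ),
        K ((k : ℝ) / (ℓ : ℝ) + ((h : ℝ) / (ℓ : ℝ)) * (s : ℝ)))
      = ∑ j ∈ Finset.Icc (-(ℓ : ℤ)) (ℓ : ℤ), K ((j : ℝ) / (ℓ : ℝ)) := by
    intro s hs
    simp only [Finset.mem_Icc] at hs
    have harg : ∀ k : ℤ, (k : ℝ) / (ℓ : ℝ) + ((h : ℝ) / (ℓ : ℝ)) * (s : ℝ)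
        = ((k + h * s : ℤ) : ℝ) / (ℓ : ℝ) := by
      intro k; push_cast; ring
    rw [Finset.sum_congr rfl fun k _ => by rw [harg k]]
    have e1 : (∑ k ∈ Finset.Icc (-(ℓ + m * h : ℤ)) ((ℓ + m * h : ℕ) : ℤ),
        K (((k + h * s : ℤ) : ℝ) / (ℓ : ℝ)))
        = ∑ j ∈ Finset.Icc (-(ℓ + m * h : ℤ) + (h : ℤ) * s) (((ℓ + m * h : ℕ) : ℤ) + (h : ℤ) * s),
            K ((j : ℝ) / (ℓ : ℝ)) := by
      rw [← Finset.map_add_right_Icc, Finset.sum_map]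
      apply Finset.sum_congr rfl
      intro k _
      simp [addRightEmbedding_apply]
    rw [e1]
    -- compare with Icc (-ℓ) ℓ via vanishing outside
    have hKout : ∀ j : ℤ, (j < -(ℓ : ℤ) ∨ (ℓ : ℤ) < j) → K ((j : ℝ) / (ℓ : ℝ)) = 0 := by
      intro j hj
      apply hKsupp
      rw [abs_div, abs_of_pos hℓ', le_div_iff₀ hℓ']
      have hj' : (ℓ : ℤ) < |j| := by
        rw [lt_abs]; omega
      have : (ℓ : ℝ) < |(j : ℝ)| := by
        rw [← Int.cast_abs]; exact_mod_cast hj'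
      linarith
    symm
    apply Finset.sum_subset
    · apply Finset.Icc_subset_Icc <;> push_cast <;> nlinarith [hs.1, hs.2,
        (by exact_mod_cast hh : (1:ℤ) ≤ (h:ℤ))]
    · intro j _ hj
      simp only [Finset.mem_Icc, not_and_or, not_le] at hj
      apply hKout
      omega
  rw [Finset.sum_congr rfl fun s hs => by rw [step2 s hs]]
  rw [← Finset.sum_mul, sum_delta, hd]
  ring
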